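/- In the renewal setup, almost surely N(t)/t → 1/θ as t → ∞. -/

import Mathlib

open Set Filter MeasureTheory ProbabilityTheory

/-- The renewal (arrival) times: `renewalTime S k ω = S 1 ω + ⋯ + S k ω`, with
`renewalTime S 0 ω = 0`. -/
noncomputable def renewalTime {Ω : Type*} (S : ℕ → Ω → ℝ) (k : ℕ) (ω : Ω) : ℝ :=
  ∑ j ∈ Finset.Icc 1 k, S j ω

/-- Deterministic core of the elementary renewal theorem. -/
lemma renewal_det (a : ℕ → ℝ) (θ : ℝ) (hθpos : 0 < θ)
    (hmono : StrictMono a)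
    (hlim : Tendsto (fun n : ℕ => a n / n) atTop (nhds θ))
    (N : ℝ → ℕ)
    (hN : ∀ t ≥ (0 : ℝ), a (N t) ≤ t ∧ t < a (N t + 1)) :
    Tendsto (fun t : ℝ => (N t : ℝ) / t) atTop (nhds (1 / θ)) := by
  -- a n → ∞
  have ha_top : Tendsto a atTop atTop := by
    have h2 : ∀ᶠ n : ℕ in atTop, θ / 2 * n ≤ a n := by
      have := hlim.eventually (eventually_ge_nhds (show θ / 2 < θ by linarith))
      filter_upwards [this, eventually_gt_atTop 0] with n hn hn0
      have hn0' : (0 : ℝ) < n := by exact_mod_cast hn0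
      calc θ / 2 * n ≤ a n / n * n := by
            apply mul_le_mul_of_nonneg_right hn hn0'.le
        _ = a n := by field_simp
    apply tendsto_atTop_mono' _ h2
    exact (tendsto_natCast_atTop_atTop).const_mul_atTop (by linarith)
  -- N t → ∞
  have hNtop : Tendsto N atTop atTop := by
    rw [tendsto_atTop]
    intro m
    have : ∀ᶠ t : ℝ in atTop, a m ≤ t ∧ 0 ≤ t := by
      filter_upwards [eventually_ge_atTop (a m), eventually_ge_atTop (0 : ℝ)] with t h1 h2
      exact ⟨h1, h2⟩
    filter_upwards [this] with t ⟨ht, ht0⟩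
    have h := hN t ht0
    have : a m < a (N t + 1) := lt_of_le_of_lt ht h.2
    have := hmono.lt_iff_lt.mp this
    omega
  have h1 : Tendsto (fun t : ℝ => a (N t) / (N t : ℝ)) atTop (nhds θ) :=
    hlim.comp hNtop
  -- a (n+1) / n → θ
  have hg : Tendsto (fun n : ℕ => a (n + 1) / (n : ℝ)) atTop (nhds θ) := by
    have gA : Tendsto (fun n : ℕ => a (n + 1) / ((n : ℝ) + 1)) atTop (nhds θ) := by
      have := hlim.comp (tendsto_add_atTop_nat 1)
      simp only [Function.comp_def] at this
      exact this.congr fun n => by push_cast; ring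
    have gB : Tendsto (fun n : ℕ => ((n : ℝ) + 1) / n) atTop (nhds 1) := by
      have : Tendsto (fun n : ℕ => 1 + 1 / (n : ℝ)) atTop (nhds (1 + 0)) :=
        tendsto_const_nhds.add tendsto_one_div_atTop_nhds_zero_nat
      rw [add_zero] at this
      apply this.congr'
      filter_upwards [eventually_gt_atTop 0] with n hn
      have hn' : (n : ℝ) ≠ 0 := Nat.cast_ne_zero.mpr hn.ne'
      field_simp
    have := gA.mul gB
    rw [mul_one] at this
    apply this.congr'
    filter_upwards [eventually_gt_atTop 0] with n hn
    have hn1 : ((n : ℝ) + 1) ≠ 0 := by positivity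
    field_simp
  have h2 : Tendsto (fun t : ℝ => a (N t + 1) / (N t : ℝ)) atTop (nhds θ) :=
    hg.comp hNtop
  -- t / N t → θ by squeeze
  have h3 : Tendsto (fun t : ℝ => t / (N t : ℝ)) atTop (nhds θ) := by
    apply tendsto_of_tendsto_of_tendsto_of_le_of_le' h1 h2
    · filter_upwards [eventually_ge_atTop (0 : ℝ), hNtop.eventually_ge_atTop 1] with t ht hNt
      have hNpos : (0 : ℝ) < (N t : ℝ) := by exact_mod_cast hNt
      exact div_le_div_of_nonneg_right (hN t ht).1 hNpos.le
    · filter_upwards [eventually_ge_atTop (0 : ℝ), hNtop.eventually_ge_atTop 1] with t ht hNt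
      have hNpos : (0 : ℝ) < (N t : ℝ) := by exact_mod_cast hNt
      exact div_le_div_of_nonneg_right (hN t ht).2.le hNpos.le
  have h4 := h3.inv₀ hθpos.ne'
  have : (fun t : ℝ => (t / (N t : ℝ))⁻¹) = fun t : ℝ => (N t : ℝ) / t := by
    funext t
    rw [inv_div]
  rw [this] at h4
  rw [one_div]
  exact h4

/-- Elementary renewal theorem (almost sure version): if the dwell times `(S k)_{k ≥ 1}`
are i.i.d., almost surely positive, with mean `0 < θ < ∞`, and `N t` is the renewal
counting process (characterized by `t_{N(t)} ≤ t < t_{N(t)+1}`), then almost surely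
`N t / t → 1 / θ` as `t → ∞`. -/
theorem stmt_5 {Ω : Type*} [MeasureSpace Ω] [IsProbabilityMeasure (ℙ : Measure Ω)]
    (S : ℕ → Ω → ℝ) (hSmeas : ∀ k, Measurable (S k))
    (hSindep : iIndepFun S ℙ)
    (hSident : ∀ k ≥ 1, IdentDistrib (S k) (S 1) ℙ ℙ)
    (hSpos : ∀ᵐ ω ∂ℙ, 0 < S 1 ω)
    (hSint : Integrable (S 1) ℙ)
    (θ : ℝ) (hθpos : 0 < θ) (hθ : (∫ ω, S 1 ω ∂ℙ) = θ)
    (N : ℝ → Ω → ℕ)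
    (hN : ∀ᵐ ω ∂ℙ, ∀ t ≥ (0 : ℝ),
      renewalTime S (N t ω) ω ≤ t ∧ t < renewalTime S (N t ω + 1) ω) :
    ∀ᵐ ω ∂ℙ,
      Filter.Tendsto (fun t : ℝ => (N t ω : ℝ) / t) Filter.atTop (nhds (1 / θ)) := by
  -- shifted sequence
  set X : ℕ → Ω → ℝ := fun k => S (k + 1) with hX
  have hX0 : X 0 = S 1 := rfl
  have hident : ∀ i, IdentDistrib (X i) (X 0) ℙ ℙ := fun i => hSident (i + 1) (by omega)
  have hindep : Pairwise (Function.onFun (fun f g => IndepFun f g ℙ) X) := fun i j hij =>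
    hSindep.indepFun (by omega)
  have hslln := strong_law_ae_real X hSint hindep hident
  -- sums of X equal renewalTime
  have hsum : ∀ n ω, ∑ i ∈ Finset.range n, X i ω = renewalTime S n ω := by
    intro n ω
    induction n with
    | zero => simp [renewalTime]
    | succ n ih =>
      rw [Finset.sum_range_succ, ih, renewalTime, renewalTime,
        Finset.sum_Icc_succ_top (by omega : 1 ≤ n + 1)]
  -- positivity of each S k, k ≥ 1, a.s.
  have hpos : ∀ᵐ ω ∂ℙ, ∀ k : ℕ, 1 ≤ k → 0 < S k ω := by
    rw [ae_all_iff]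
    intro k
    rcases Nat.eq_zero_or_pos k with hk | hk
    · subst hk; simp
    · have := (hSident k hk).symm.ae_snd (p := fun x => 0 < x)
        measurableSet_Ioi hSpos
      filter_upwards [this] with ω hω _
      exact hω
  filter_upwards [hslln, hpos, hN] with ω hωlim hωpos hωN
  have hθ' : (∫ ω, X 0 ω ∂ℙ) = θ := hθ
  rw [hθ'] at hωlim
  have hlim : Tendsto (fun n : ℕ => renewalTime S n ω / n) atTop (nhds θ) := by
    apply hωlim.congr
    intro n
    rw [hsum]
  have hmono : StrictMono (fun n => renewalTime S n ω) := by
    apply strictMono_nat_of_lt_succ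
    intro n
    have : renewalTime S (n + 1) ω = renewalTime S n ω + S (n + 1) ω := by
      rw [renewalTime, renewalTime, Finset.sum_Icc_succ_top (by omega : 1 ≤ n + 1)]
    rw [this]
    have := hωpos (n + 1) (by omega)
    linarith
  exact renewal_det (fun n => renewalTime S n ω) θ hθpos hmono hlim (fun t => N t ω) hωN
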